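/- arXiv:2502.01935 — 2 statements merged into one kernel-verified Lean document; each statement's English description precedes it below -/
import Mathlib

section
/- Let (X,d) be a compact metric space and let μ : C(X) → [0, μ(X)] be a Whitney map. Then for each ε > 0 there exists δ > 0 such that for all A, B ∈ C(X), if B ⊆ N_d(A, δ) and |μ(A) − μ(B)| < δ, then H_d(A, B) < ε. -/
open Set Metric TopologicalSpace

/-- The hyperspace `C(X)` of all subcontinua of a metric space `X`,
equipped with the Hausdorff metric (via the metric on `NonemptyCompacts X`). -/
abbrev Hyperspace (X : Type) [MetricSpace X] : Type :=
  {K : NonemptyCompacts X // IsConnected (K : Set X)}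

namespace Hyperspace

variable {X : Type} [MetricSpace X]

/-- The underlying subset of `X` of an element of the hyperspace. -/
def toSet (A : Hyperspace X) : Set X := (A.1 : Set X)

/-- The singleton `{x}` as an element of the hyperspace. -/
def sngl (x : X) : Hyperspace X :=
  ⟨⟨⟨{x}, isCompact_singleton⟩, Set.singleton_nonempty x⟩, isConnected_singleton⟩

/-- The whole space as an element of the hyperspace of a continuum. -/
def whole (X : Type) [MetricSpace X] [CompactSpace X] [ConnectedSpace X] : Hyperspace X :=
  ⟨⟨⟨Set.univ, isCompact_univ⟩, Set.univ_nonempty⟩, isConnected_univ⟩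

end Hyperspace

/-- `μ : C(X) → ℝ` is a Whitney map: it is continuous, vanishes on singletons, and is
strictly monotone with respect to strict inclusion. (Its values then automatically lie in
`[0, μ(X)]`.) -/
def IsWhitneyMap {X : Type} [MetricSpace X] (μ : Hyperspace X → ℝ) : Prop :=
  Continuous μ ∧ (∀ x : X, μ (Hyperspace.sngl x) = 0) ∧
    ∀ A B : Hyperspace X, A.toSet ⊂ B.toSet → μ A < μ B

/-- The Whitney level `μ⁻¹(t)`, as a metric subspace of the hyperspace. -/
abbrev WhitneyLevel {X : Type} [MetricSpace X] (μ : Hyperspace X → ℝ) (t : ℝ) : Type :=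
  {A : Hyperspace X // μ A = t}

/-- A subcontinuum: a nonempty compact connected subset. -/
def IsSubcontinuum {Y : Type*} [TopologicalSpace Y] (T : Set Y) : Prop :=
  IsCompact T ∧ IsConnected T

/-- A (metrizable compact connected nonempty) space is a continuum. -/
def IsContinuumSpace (Y : Type*) [MetricSpace Y] : Prop :=
  CompactSpace Y ∧ ConnectedSpace Y

/-- A bundled nonempty compact connected metric space (continuum). -/
structure Continuum where
  carrier : Type
  [metric : MetricSpace carrier]
  [compact : CompactSpace carrier]
  [connected : ConnectedSpace carrier]

instance : CoeSort Continuum Type := ⟨Continuum.carrier⟩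
instance (Z : Continuum) : MetricSpace Z := Z.metric
instance (Z : Continuum) : CompactSpace Z := Z.compact
instance (Z : Continuum) : ConnectedSpace Z := Z.connected

/-- `L` is a partition between `A` and `B`: the complement of `L` is the union of two
disjoint open sets containing `A` and `B` respectively. -/
def IsPartitionBetween {Y : Type*} [TopologicalSpace Y] (L A B : Set Y) : Prop :=
  ∃ U V : Set Y, IsOpen U ∧ IsOpen V ∧ Disjoint U V ∧ A ⊆ U ∧ B ⊆ V ∧ U ∪ V = Lᶜ

/-- A space is weakly infinite-dimensional if every countable family of pairs of disjoint
closed sets admits a family of closed partitions between them. -/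
def WeaklyInfiniteDimensional (Y : Type*) [TopologicalSpace Y] : Prop :=
  ∀ A B : ℕ → Set Y, (∀ i, IsClosed (A i) ∧ IsClosed (B i) ∧ Disjoint (A i) (B i)) →
    ∃ L : ℕ → Set Y, ∀ i, IsClosed (L i) ∧ IsPartitionBetween (L i) (A i) (B i)

/-- Covering dimension at most `n`: every finite open cover has a finite open refinement
of order at most `n + 1`. -/
def CovDimLE (Y : Type*) [TopologicalSpace Y] (n : ℕ) : Prop :=
  ∀ (k : ℕ) (U : Fin k → Set Y), (∀ i, IsOpen (U i)) → (⋃ i, U i) = Set.univ →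
    ∃ (m : ℕ) (V : Fin m → Set Y), (∀ j, IsOpen (V j)) ∧ (⋃ j, V j) = Set.univ ∧
      (∀ j, ∃ i, V j ⊆ U i) ∧ ∀ y : Y, {j | y ∈ V j}.ncard ≤ n + 1

/-- `S ⊆ Y` is an arc with endpoints `a` and `b`. -/
def IsArcWithEndpoints {Y : Type*} [TopologicalSpace Y] (S : Set Y) (a b : Y) : Prop :=
  ∃ f : Set.Icc (0 : ℝ) 1 → Y, Topology.IsEmbedding f ∧ Set.range f = S ∧
    f ⟨0, by norm_num⟩ = a ∧ f ⟨1, by norm_num⟩ = b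

/-- A space contains a simple closed curve if some subspace is homeomorphic to the circle. -/
def ContainsSimpleClosedCurve (Y : Type*) [TopologicalSpace Y] : Prop :=
  ∃ S : Set Y, Nonempty (S ≃ₜ Circle)

/-- A dendrite: a locally connected continuum containing no simple closed curve. -/
def IsDendrite (Y : Type*) [MetricSpace Y] : Prop :=
  CompactSpace Y ∧ ConnectedSpace Y ∧ LocallyConnectedSpace Y ∧ ¬ ContainsSimpleClosedCurve Y

/-- `D`-continuum. -/
def IsDContinuum (Y : Type*) [MetricSpace Y] : Prop :=
  ∀ A B : Set Y, IsSubcontinuum A → IsSubcontinuum B → A.Nontrivial → B.Nontrivial →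
    Disjoint A B → ∃ L : Set Y, IsSubcontinuum L ∧ (A ∩ L).Nonempty ∧ (B ∩ L).Nonempty ∧
      ((A ∪ B) \ L).Nonempty

/-- `D*`-continuum. -/
def IsDStarContinuum (Y : Type*) [MetricSpace Y] : Prop :=
  ∀ A B : Set Y, IsSubcontinuum A → IsSubcontinuum B → A.Nontrivial → B.Nontrivial →
    Disjoint A B → ∃ L : Set Y, IsSubcontinuum L ∧ (A ∩ L).Nonempty ∧ (B ∩ L).Nonempty ∧
      (A \ L).Nonempty ∧ (B \ L).Nonempty

/-- `D**`-continuum. -/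
def IsDStarStarContinuum (Y : Type*) [MetricSpace Y] : Prop :=
  ∀ A B : Set Y, IsSubcontinuum A → IsSubcontinuum B → A.Nontrivial → B.Nontrivial →
    Disjoint A B → ∃ L : Set Y, IsSubcontinuum L ∧ (A ∩ L).Nonempty ∧ (B ∩ L).Nonempty ∧
      (B \ L).Nonempty

/-- Wilder continuum. -/
def IsWilder (Y : Type*) [MetricSpace Y] : Prop :=
  ∀ x y z : Y, x ≠ y → y ≠ z → x ≠ z →
    ∃ L : Set Y, IsSubcontinuum L ∧ x ∈ L ∧ ((y ∈ L ∧ z ∉ L) ∨ (y ∉ L ∧ z ∈ L))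

/-- Semi-aposyndetic continuum. -/
def IsSemiAposyndetic (Y : Type*) [MetricSpace Y] : Prop :=
  ∀ x y : Y, x ≠ y → ∃ T : Set Y, IsSubcontinuum T ∧
    ((x ∈ interior T ∧ y ∉ T) ∨ (x ∉ T ∧ y ∈ interior T))

/-- Aposyndetic continuum. -/
def IsAposyndetic (Y : Type*) [MetricSpace Y] : Prop :=
  ∀ x y : Y, x ≠ y → ∃ T : Set Y, IsSubcontinuum T ∧ x ∈ interior T ∧ y ∉ T

/-- `n`-aposyndetic continuum. -/
def IsNAposyndetic (Y : Type*) [MetricSpace Y] (n : ℕ) : Prop :=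
  ∀ (x : Y) (A : Finset Y), A.card = n → x ∉ A →
    ∃ T : Set Y, IsSubcontinuum T ∧ x ∈ interior T ∧ ∀ a ∈ A, a ∉ T

/-- Countable closed set-aposyndetic continuum. -/
def IsCountableClosedSetAposyndetic (Y : Type*) [MetricSpace Y] : Prop :=
  ∀ (x : Y) (A : Set Y), A.Countable → IsClosed A → x ∉ A →
    ∃ T : Set Y, IsSubcontinuum T ∧ x ∈ interior T ∧ T ⊆ Aᶜ

/-- `0`-dimensional closed set-aposyndetic continuum (via totally disconnected closed sets). -/
def IsZeroDimClosedSetAposyndetic (Y : Type*) [MetricSpace Y] : Prop :=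
  ∀ (x : Y) (A : Set Y), IsTotallyDisconnected A → IsClosed A → x ∉ A →
    ∃ T : Set Y, IsSubcontinuum T ∧ x ∈ interior T ∧ T ⊆ Aᶜ

/-- `n`-dimensional closed set-aposyndetic continuum. -/
def IsNDimClosedSetAposyndetic (Y : Type*) [MetricSpace Y] (n : ℕ) : Prop :=
  ∀ (x : Y) (A : Set Y), IsClosed A → CovDimLE A n → x ∉ A →
    ∃ T : Set Y, IsSubcontinuum T ∧ x ∈ interior T ∧ T ⊆ Aᶜ

/-- Finite-dimensional closed set-aposyndetic continuum. -/
def IsFinDimClosedSetAposyndetic (Y : Type*) [MetricSpace Y] : Prop :=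
  ∀ (x : Y) (A : Set Y), IsClosed A → (∃ n : ℕ, CovDimLE A n) → x ∉ A →
    ∃ T : Set Y, IsSubcontinuum T ∧ x ∈ interior T ∧ T ⊆ Aᶜ

/-- Weakly infinite-dimensional closed set-aposyndetic continuum. -/
def IsWIDClosedSetAposyndetic (Y : Type*) [MetricSpace Y] : Prop :=
  ∀ (x : Y) (A : Set Y), IsClosed A → WeaklyInfiniteDimensional A → x ∉ A →
    ∃ T : Set Y, IsSubcontinuum T ∧ x ∈ interior T ∧ T ⊆ Aᶜ

theorem isClosed_connected_nonemptyCompacts {X : Type} [MetricSpace X] :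
    IsClosed {K : NonemptyCompacts X | IsConnected (K : Set X)} := by
  rw [← isOpen_compl_iff, Metric.isOpen_iff]
  intro K hK
  rw [mem_compl_iff, mem_setOf_eq, IsConnected, not_and_or] at hK
  have hKne : (K : Set X).Nonempty := K.nonempty
  have hnp : ¬ IsPreconnected (K : Set X) := by tauto
  rw [IsPreconnected] at hnp
  push_neg at hnp
  obtain ⟨u, v, hu, hv, huv, ⟨cu, hcu⟩, ⟨cv, hcv⟩, hdisj⟩ := hnp
  set C : Set X := (K : Set X) \ v with hC
  set D : Set X := (K : Set X) \ u with hD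
  have hCD : Disjoint C D := by
    rw [Set.disjoint_left]
    rintro x ⟨hxK, hxv⟩ ⟨_, hxu⟩
    rcases huv hxK with h | h
    · exact hxu h
    · exact hxv h
  obtain ⟨δ, hδ, hdisj2⟩ := hCD.exists_thickenings (K.isCompact.diff hv)
    (K.isCompact.diff hu).isClosed
  refine ⟨δ, hδ, ?_⟩
  intro K' hK'
  rw [mem_ball, NonemptyCompacts.dist_eq] at hK'
  have hfin : EMetric.hausdorffEdist (K' : Set X) (K : Set X) ≠ ⊤ :=
    Metric.hausdorffEdist_ne_top_of_nonempty_of_bounded K'.nonempty hKne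
      K'.isCompact.isBounded K.isCompact.isBounded
  have hfin' : EMetric.hausdorffEdist (K : Set X) (K' : Set X) ≠ ⊤ := by
    unfold EMetric.hausdorffEdist at hfin ⊢
    rwa [Metric.hausdorffEDist_comm]
  rw [mem_compl_iff, mem_setOf_eq]
  rintro ⟨-, hpc⟩
  have hsub : (K' : Set X) ⊆ thickening δ C ∪ thickening δ D := by
    intro x hx
    have h1 : infDist x (K : Set X) < δ :=
      lt_of_le_of_lt (infDist_le_hausdorffDist_of_mem hx hfin) hK'
    obtain ⟨y, hyK, hxy⟩ := (infDist_lt_iff hKne).1 h1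
    by_cases hyv : y ∈ v
    · exact Or.inr (mem_thickening_iff.2 ⟨y, ⟨hyK, fun hyu => (Set.eq_empty_iff_forall_notMem.1 hdisj y) ⟨hyK, hyu, hyv⟩⟩, hxy⟩)
    · exact Or.inl (mem_thickening_iff.2 ⟨y, ⟨hyK, hyv⟩, hxy⟩)
  have hmeets : ∀ c ∈ (K : Set X), ((K' : Set X) ∩ thickening δ ({x | x ∈ (K:Set X)} ∩ {x | dist c x = 0})).Nonempty → True := fun _ _ _ => trivial
  have key : ∀ c : X, c ∈ (K : Set X) →
      ∃ x ∈ (K' : Set X), dist c x < δ := by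
    intro c hc
    have h1 : infDist c (K' : Set X) < δ := by
      calc infDist c (K' : Set X) ≤ hausdorffDist (K : Set X) (K' : Set X) :=
            infDist_le_hausdorffDist_of_mem hc hfin'
        _ = hausdorffDist (K' : Set X) (K : Set X) := hausdorffDist_comm
        _ < δ := hK'
    exact (infDist_lt_iff K'.nonempty).1 h1
  obtain ⟨x1, hx1, hdx1⟩ := key cu (mem_of_mem_inter_left hcu)
  obtain ⟨x2, hx2, hdx2⟩ := key cv (mem_of_mem_inter_left hcv)
  have hx1' : x1 ∈ thickening δ C :=
    mem_thickening_iff.2 ⟨cu, ⟨hcu.1, fun hv' => (Set.eq_empty_iff_forall_notMem.1 hdisj cu) ⟨hcu.1, hcu.2, hv'⟩⟩,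
      by rwa [dist_comm]⟩
  have hx2' : x2 ∈ thickening δ D :=
    mem_thickening_iff.2 ⟨cv, ⟨hcv.1, fun hu' => (Set.eq_empty_iff_forall_notMem.1 hdisj cv) ⟨hcv.1, hu', hcv.2⟩⟩,
      by rwa [dist_comm]⟩
  obtain ⟨z, _, hz1, hz2⟩ := hpc (thickening δ C) (thickening δ D)
    isOpen_thickening isOpen_thickening hsub ⟨x1, hx1, hx1'⟩ ⟨x2, hx2, hx2'⟩
  exact Set.disjoint_left.1 hdisj2 hz1 hz2

instance hyperspaceCompact {X : Type} [MetricSpace X] [CompactSpace X] :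
    CompactSpace (Hyperspace X) :=
  isCompact_iff_compactSpace.1
    ((isClosed_connected_nonemptyCompacts (X := X)).isCompact)

theorem hyperspace_dist_eq {X : Type} [MetricSpace X] (A B : Hyperspace X) :
    dist A B = hausdorffDist A.toSet B.toSet := by
  rw [Subtype.dist_eq, NonemptyCompacts.dist_eq]; rfl

/-- For a compact metric space `X` and a Whitney map `μ` on `C(X)`: for each `ε > 0` there is
`δ > 0` such that if `B ⊆ N_d(A, δ)` and `|μ(A) - μ(B)| < δ` then `H_d(A, B) < ε`. -/
theorem statement0 {X : Type} [MetricSpace X] [CompactSpace X]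
    (μ : Hyperspace X → ℝ) (hμ : IsWhitneyMap μ) :
    ∀ ε > (0 : ℝ), ∃ δ > (0 : ℝ), ∀ A B : Hyperspace X,
      B.toSet ⊆ Metric.thickening δ A.toSet → |μ A - μ B| < δ → dist A B < ε := by
  intro ε hε
  by_contra hcon
  push_neg at hcon
  have hseq : ∀ n : ℕ, ∃ A B : Hyperspace X,
      B.toSet ⊆ Metric.thickening (1 / (n + 1) : ℝ) A.toSet ∧
      |μ A - μ B| < 1 / (n + 1) ∧ ε ≤ dist A B := by
    intro n
    obtain ⟨A, B, h1, h2, h3⟩ := hcon (1 / (n + 1)) (by positivity)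
    exact ⟨A, B, h1, h2, h3⟩
  choose A B hsub habs hdist using hseq
  obtain ⟨⟨Ainf, Binf⟩, -, φ, hφ, hconv⟩ :=
    isCompact_univ.tendsto_subseq (x := fun n => (A n, B n)) (fun n => Set.mem_univ _)
  have hAconv : Filter.Tendsto (fun n => A (φ n)) Filter.atTop (nhds Ainf) :=
    ((continuous_fst.tendsto _).comp hconv)
  have hBconv : Filter.Tendsto (fun n => B (φ n)) Filter.atTop (nhds Binf) :=
    ((continuous_snd.tendsto _).comp hconv)
  have hone : Filter.Tendsto (fun n : ℕ => (1 / (n + 1) : ℝ)) Filter.atTop (nhds 0) :=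
    tendsto_one_div_add_atTop_nhds_zero_nat
  have hbound : ∀ n : ℕ, (1 / ((φ n : ℝ) + 1)) ≤ 1 / (n + 1) := by
    intro n
    apply one_div_le_one_div_of_le (by positivity)
    have hn : (n : ℝ) ≤ (φ n : ℝ) := Nat.cast_le.2 hφ.le_apply
    linarith
  -- μ Ainf = μ Binf
  have hμd : Filter.Tendsto (fun n => μ (A (φ n)) - μ (B (φ n))) Filter.atTop
      (nhds (μ Ainf - μ Binf)) :=
    ((hμ.1.tendsto Ainf).comp hAconv).sub ((hμ.1.tendsto Binf).comp hBconv)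
  have hμ0 : Filter.Tendsto (fun n => μ (A (φ n)) - μ (B (φ n))) Filter.atTop (nhds 0) := by
    have hneg : Filter.Tendsto (fun n : ℕ => -(1 / (n + 1) : ℝ)) Filter.atTop (nhds 0) := by
      simpa using hone.neg
    refine tendsto_of_tendsto_of_tendsto_of_le_of_le hneg hone (fun n => ?_) (fun n => ?_)
    · have := (abs_lt.1 (lt_of_lt_of_le (habs (φ n)) (hbound n))).1
      linarith
    · exact (abs_lt.1 (lt_of_lt_of_le (habs (φ n)) (hbound n))).2.le
  have hμeq : μ Ainf = μ Binf := by
    have := tendsto_nhds_unique hμd hμ0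
    linarith
  -- ε ≤ dist Ainf Binf
  have hdconv : Filter.Tendsto (fun n => dist (A (φ n)) (B (φ n))) Filter.atTop
      (nhds (dist Ainf Binf)) := hAconv.dist hBconv
  have hεle : ε ≤ dist Ainf Binf :=
    le_of_tendsto_of_tendsto tendsto_const_nhds hdconv
      (Filter.Eventually.of_forall fun n => hdist (φ n))
  have hne : Ainf ≠ Binf := by
    intro h
    rw [h, dist_self] at hεle
    linarith
  -- Binf ⊆ Ainf
  have hBA : Binf.toSet ⊆ Ainf.toSet := by
    intro b hb
    have hclosed : IsClosed Ainf.toSet := Ainf.1.isCompact.isClosed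
    rw [← hclosed.closure_eq]
    rw [Metric.mem_closure_iff]
    intro η hη
    have hA3 : ∀ᶠ n in Filter.atTop, dist (A (φ n)) Ainf < η / 3 :=
      Filter.eventually_atTop.2 (Metric.tendsto_atTop.1 hAconv (η / 3) (by linarith))
    have hB3 : ∀ᶠ n in Filter.atTop, dist (B (φ n)) Binf < η / 3 :=
      Filter.eventually_atTop.2 (Metric.tendsto_atTop.1 hBconv (η / 3) (by linarith))
    have hone3 : ∀ᶠ n : ℕ in Filter.atTop, (1 / ((n : ℝ) + 1)) < η / 3 := by
      have := Filter.eventually_atTop.2 (Metric.tendsto_atTop.1 hone (η / 3) (by linarith))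
      refine this.mono fun n h => ?_
      rw [Real.dist_eq, sub_zero, abs_of_pos (by positivity)] at h
      exact h
    obtain ⟨n, hn1, hn2, hn3⟩ := (hA3.and (hB3.and hone3)).exists
    obtain ⟨hn1, hn2, hn3⟩ := (⟨hn1, hn2, hn3⟩ :
      dist (A (φ n)) Ainf < η / 3 ∧ dist (B (φ n)) Binf < η / 3 ∧ (1 / ((n : ℝ) + 1)) < η / 3)
    -- chase points
    have hfinB : EMetric.hausdorffEdist Binf.toSet (B (φ n)).toSet ≠ ⊤ :=
      Metric.hausdorffEdist_ne_top_of_nonempty_of_bounded Binf.1.nonempty (B (φ n)).1.nonempty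
        Binf.1.isCompact.isBounded (B (φ n)).1.isCompact.isBounded
    have h4 : Metric.infDist b (B (φ n)).toSet < η / 3 := by
      calc Metric.infDist b (B (φ n)).toSet
          ≤ hausdorffDist Binf.toSet (B (φ n)).toSet :=
            Metric.infDist_le_hausdorffDist_of_mem hb hfinB
        _ = dist (B (φ n)) Binf := by rw [hausdorffDist_comm, ← hyperspace_dist_eq]
        _ < η / 3 := hn2
    obtain ⟨b', hb', hbb'⟩ := (Metric.infDist_lt_iff (B (φ n)).1.nonempty).1 h4
    obtain ⟨a', ha', hba'⟩ := Metric.mem_thickening_iff.1 (hsub (φ n) hb')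
    have hfinA : EMetric.hausdorffEdist (A (φ n)).toSet Ainf.toSet ≠ ⊤ :=
      Metric.hausdorffEdist_ne_top_of_nonempty_of_bounded (A (φ n)).1.nonempty Ainf.1.nonempty
        (A (φ n)).1.isCompact.isBounded Ainf.1.isCompact.isBounded
    have h5 : Metric.infDist a' Ainf.toSet < η / 3 := by
      calc Metric.infDist a' Ainf.toSet
          ≤ hausdorffDist (A (φ n)).toSet Ainf.toSet :=
            Metric.infDist_le_hausdorffDist_of_mem ha' hfinA
        _ = dist (A (φ n)) Ainf := (hyperspace_dist_eq _ _).symm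
        _ < η / 3 := hn1
    obtain ⟨a, ha, ha'a⟩ := (Metric.infDist_lt_iff Ainf.1.nonempty).1 h5
    refine ⟨a, ha, ?_⟩
    have hba'' : dist b' a' < η / 3 :=
      lt_of_lt_of_le (lt_of_lt_of_le hba' (hbound n)) hn3.le
    calc dist b a ≤ dist b b' + dist b' a' + dist a' a := dist_triangle4 _ _ _ _
      _ < η / 3 + η / 3 + η / 3 := by gcongr
      _ = η := by ring
  -- strict inclusion gives contradiction
  have hssub : Binf.toSet ⊂ Ainf.toSet := by
    refine ⟨hBA, fun h => hne ?_⟩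
    have : Ainf.toSet = Binf.toSet := le_antisymm h hBA
    exact Subtype.ext (NonemptyCompacts.ext this)
  have := hμ.2.2 Binf Ainf hssub
  linarith [hμeq.symm ▸ this]
end

section
/- For each n ∈ ℕ, there exists a nondegenerate continuum X that is n-aposyndetic but not (n+1)-aposyndetic. -/
open Set Metric TopologicalSpace

noncomputable section Stmt19aux
namespace Stmt19

abbrev EE : Type := (ℝ × ℝ) × ℝ

def Sq : Set (ℝ × ℝ) := Icc 0 1 ×ˢ Icc 0 1

lemma Sq_compact : IsCompact Sq := isCompact_Icc.prod isCompact_Icc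
lemma Sq_closed : IsClosed Sq := (isClosed_Icc.prod isClosed_Icc)
lemma Sq_convex : Convex ℝ Sq := (convex_Icc _ _).prod (convex_Icc _ _)
lemma mem_Sq {z : ℝ × ℝ} : z ∈ Sq ↔ (z.1 ∈ Icc (0:ℝ) 1 ∧ z.2 ∈ Icc (0:ℝ) 1) := Iff.rfl

variable (n : ℕ)

def pp (i : Fin (n+1)) : ℝ × ℝ := ((i : ℝ) / n, 1)

def Pset : Set (ℝ × ℝ) := Set.range (pp n)

def dd (z : ℝ × ℝ) : ℝ := infDist z (Pset n)

def KK : Set ℝ := insert 0 (Set.range fun k : ℕ => 1/(k+1 : ℝ))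

def Phi : ℝ × (ℝ × ℝ) → EE := fun q => (q.2, q.1 * dd n q.2)

def Xset : Set EE := Phi n '' (KK ×ˢ Sq)

variable {n}

lemma pp_inj (hn : 0 < n) : Function.Injective (pp n) := by
  intro i j h
  have : (i : ℝ) / n = (j : ℝ) / n := congrArg Prod.fst h
  have hn' : (n : ℝ) ≠ 0 := Nat.cast_ne_zero.mpr hn.ne'
  have hval : (i : ℕ) = (j : ℕ) := by
    field_simp at this; exact_mod_cast this
  exact Fin.val_injective hval

lemma pp_mem_Sq (hn : 0 < n) (i : Fin (n+1)) : pp n i ∈ Sq := by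
  have h1 : (0:ℝ) ≤ (i : ℝ) / n := by positivity
  have h2 : (i : ℝ) / n ≤ 1 := by
    rw [div_le_one (by exact_mod_cast hn)]
    exact_mod_cast Fin.is_le i
  exact ⟨⟨h1, h2⟩, ⟨zero_le_one, le_refl 1⟩⟩

lemma Pset_finite : (Pset n).Finite := Set.finite_range _
lemma Pset_closed : IsClosed (Pset n) := (Pset_finite).isClosed
lemma Pset_nonempty : (Pset n).Nonempty := ⟨pp n 0, Set.mem_range_self _⟩

lemma dd_nonneg (z : ℝ × ℝ) : 0 ≤ dd n z := infDist_nonneg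

lemma dd_eq_zero_iff (z : ℝ × ℝ) : dd n z = 0 ↔ z ∈ Pset n :=
  ((Pset_closed).mem_iff_infDist_zero Pset_nonempty).symm

lemma dd_pos {z : ℝ × ℝ} (hz : z ∉ Pset n) : 0 < dd n z :=
  lt_of_le_of_ne (dd_nonneg z) (fun h => hz ((dd_eq_zero_iff z).mp h.symm))

lemma dd_cont : Continuous (dd n) := continuous_infDist_pt _

lemma KK_zero_mem : (0:ℝ) ∈ KK := Set.mem_insert _ _

lemma KK_countable : (KK).Countable := (Set.countable_range _).insert 0

lemma KK_compact : IsCompact KK :=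
  tendsto_one_div_add_atTop_nhds_zero_nat.isCompact_insert_range

lemma KK_small {ε : ℝ} (hε : 0 < ε) : ∃ c ∈ KK, 0 < c ∧ c < ε := by
  obtain ⟨k, hk⟩ := exists_nat_one_div_lt hε
  exact ⟨1/(k+1 : ℝ), Set.mem_insert_of_mem _ ⟨k, rfl⟩, by positivity, hk⟩

lemma Phi_cont : Continuous (Phi n) :=
  continuous_snd.prodMk (continuous_fst.mul (dd_cont.comp continuous_snd))

lemma Xset_compact : IsCompact (Xset n) :=
  ((KK_compact).prod Sq_compact).image Phi_cont

lemma mem_Xset {c : ℝ} {z : ℝ × ℝ} (hc : c ∈ KK) (hz : z ∈ Sq) :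
    Phi n (c, z) ∈ Xset n := Set.mem_image_of_mem _ ⟨hc, hz⟩

lemma Phi_special (c : ℝ) {z : ℝ × ℝ} (hz : z ∈ Pset n) : Phi n (c, z) = (z, 0) := by
  simp [Phi, (dd_eq_zero_iff z).mpr hz]

lemma sp_mem (hn : 0 < n) (i : Fin (n+1)) : ((pp n i, 0) : EE) ∈ Xset n := by
  have := mem_Xset (n := n) KK_zero_mem (pp_mem_Sq hn i)
  rwa [Phi_special 0 (Set.mem_range_self i)] at this


lemma slices_conn (hn : 0 < n) (K' : Set ℝ) (R : Set (ℝ × ℝ)) (hR : IsPreconnected R)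
    (i : Fin (n+1)) (hiR : pp n i ∈ R) :
    IsPreconnected (Phi n '' (K' ×ˢ R)) := by
  rcases Set.eq_empty_or_nonempty (Phi n '' (K' ×ˢ R)) with h | h
  · rw [h]; exact isPreconnected_empty
  apply isPreconnected_of_forall_pair
  rintro x ⟨⟨c, z⟩, ⟨hc, hz⟩, rfl⟩ y ⟨⟨c', z'⟩, ⟨hc', hz'⟩, rfl⟩
  refine ⟨(fun w => Phi n (c, w)) '' R ∪ (fun w => Phi n (c', w)) '' R, ?_, ?_, ?_, ?_⟩
  · rintro w (⟨u, hu, rfl⟩ | ⟨u, hu, rfl⟩)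
    exacts [⟨(c, u), ⟨hc, hu⟩, rfl⟩, ⟨(c', u), ⟨hc', hu⟩, rfl⟩]
  · exact Or.inl ⟨z, hz, rfl⟩
  · exact Or.inr ⟨z', hz', rfl⟩
  · apply IsPreconnected.union ((pp n i, 0) : EE)
    · exact ⟨pp n i, hiR, Phi_special c (Set.mem_range_self i)⟩
    · exact ⟨pp n i, hiR, Phi_special c' (Set.mem_range_self i)⟩
    · exact hR.image _ (Phi_cont.comp (Continuous.prodMk_right c)).continuousOn
    · exact hR.image _ (Phi_cont.comp (Continuous.prodMk_right c')).continuousOn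

lemma exists_pos_lt_dist {β : Type*} {α : Type*} [MetricSpace α] (F : Finset β) (f : β → α)
    (z : α) (h : ∀ b ∈ F, f b ≠ z) : ∃ δ > 0, ∀ b ∈ F, δ < dist (f b) z := by
  rcases F.eq_empty_or_nonempty with rfl | hne
  · exact ⟨1, one_pos, by simp⟩
  · set m := (F.image fun b => dist (f b) z).min' (hne.image _) with hm
    obtain ⟨b, hbF, hbm⟩ := Finset.mem_image.mp ((F.image fun b => dist (f b) z).min'_mem (hne.image _))
    have hm0 : 0 < m := by rw [hm, ← hbm]; exact dist_pos.mpr (h b hbF)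
    refine ⟨m/2, by linarith, fun b hb => ?_⟩
    have := (F.image fun b => dist (f b) z).min'_le _ (Finset.mem_image_of_mem _ hb)
    linarith

lemma grid (S : Set (ℝ × ℝ)) (hSfin : S.Finite) (hSsub : S ⊆ Sq) (z : ℝ × ℝ) (hz : z ∈ Sq)
    (hzS : z ∉ S) (q : ℝ) (hq : q ∈ Icc (0:ℝ) 1) (hqS : ((q, (1:ℝ)) : ℝ × ℝ) ∉ S) :
    ∃ R : Set (ℝ × ℝ), IsCompact R ∧ IsPreconnected R ∧ R ⊆ Sq ∧ ((q, (1:ℝ)) : ℝ × ℝ) ∈ R ∧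
      (∀ s ∈ S, s ∉ R) ∧ ∃ δ > 0, ∀ w ∈ Sq, dist w z < δ → w ∈ R := by
  classical
  obtain ⟨hz1, hz2⟩ := mem_Sq.mp hz
  -- δ smaller than distance from z to S
  obtain ⟨δ, hδ0, hδ⟩ : ∃ δ > 0, ∀ s ∈ S, δ < dist s z := by
    obtain ⟨δ, h1, h2⟩ := exists_pos_lt_dist hSfin.toFinset id z
      (fun s hs => fun h => hzS (h ▸ (hSfin.mem_toFinset.mp hs)))
    exact ⟨δ, h1, fun s hs => h2 s (hSfin.mem_toFinset.mpr hs)⟩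
  -- pick vertical channel x = a near z avoiding first coordinates of S
  have hIlt : max 0 (z.1 - δ) < min 1 (z.1 + δ) := by
    rcases hz1 with ⟨h01, h11⟩
    simp only [max_lt_iff, lt_min_iff]
    exact ⟨⟨zero_lt_one, by linarith⟩, ⟨by linarith, by linarith⟩⟩
  obtain ⟨a, haI, haS⟩ := ((Set.Icc_infinite hIlt).diff (hSfin.image Prod.fst)).nonempty
  have ha01 : a ∈ Icc (0:ℝ) 1 :=
    Icc_subset_Icc (le_max_left _ _) (min_le_left _ _) haI
  have hazd : |a - z.1| ≤ δ := by
    rcases haI with ⟨hl, hr⟩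
    rw [abs_le]
    constructor
    · have := le_trans (le_max_right 0 (z.1 - δ)) hl; linarith
    · have := le_trans hr (min_le_right 1 (z.1 + δ)); linarith
  -- pick horizontal channel height b below 1 and above all S-heights < 1
  obtain ⟨m, hm0, hm1, hmub⟩ : ∃ m, 0 ≤ m ∧ m < 1 ∧ ∀ s ∈ S, s.2 ≠ 1 → s.2 ≤ m := by
    set F2 : Finset ℝ := insert (0:ℝ)
      ((hSfin.toFinset.filter (fun s => s.2 ≠ 1)).image Prod.snd) with hF2
    have hF2ne : F2.Nonempty := ⟨0, Finset.mem_insert_self _ _⟩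
    refine ⟨F2.max' hF2ne, F2.le_max' 0 (Finset.mem_insert_self _ _), ?_, ?_⟩
    · have := F2.max'_mem hF2ne
      rcases Finset.mem_insert.mp this with h | h
      · rw [h]; exact zero_lt_one
      · obtain ⟨s, hs, hs2⟩ := Finset.mem_image.mp h
        rw [Finset.mem_filter] at hs
        have hsS : s ∈ S := hSfin.mem_toFinset.mp hs.1
        have : s.2 ≤ 1 := (mem_Sq.mp (hSsub hsS)).2.2
        rw [← hs2]
        exact lt_of_le_of_ne this hs.2
    · intro s hs hs2
      apply F2.le_max'
      rw [hF2]
      exact Finset.mem_insert_of_mem (Finset.mem_image_of_mem _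
        (Finset.mem_filter.mpr ⟨hSfin.mem_toFinset.mpr hs, hs2⟩))
  set b : ℝ := (m + 1) / 2 with hb
  have hmb : m < b := by rw [hb]; linarith
  have hb1 : b < 1 := by rw [hb]; linarith
  have hb0 : 0 ≤ b := by rw [hb]; linarith
  have hbS : ∀ s ∈ S, s.2 ≠ b := by
    intro s hs
    rcases eq_or_ne s.2 1 with h | h
    · rw [h]; exact hb1.ne'
    · have := hmub s hs h; intro h2; rw [h2] at this; linarith
  -- the four pieces
  set B : Set (ℝ × ℝ) := closedBall z δ ∩ Sq with hB
  set L1 : Set (ℝ × ℝ) := {a} ×ˢ Icc (min z.2 b) (max z.2 b) with hL1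
  set L2 : Set (ℝ × ℝ) := Icc (min a q) (max a q) ×ˢ {b} with hL2
  set L3 : Set (ℝ × ℝ) := {q} ×ˢ Icc b 1 with hL3
  refine ⟨((B ∪ L1) ∪ L2) ∪ L3, ?_, ?_, ?_, ?_, ?_, ?_⟩
  · exact ((((isCompact_closedBall z δ).inter_right Sq_closed).union
      (isCompact_singleton.prod isCompact_Icc)).union
      (isCompact_Icc.prod isCompact_singleton)).union
      (isCompact_singleton.prod isCompact_Icc)
  · -- preconnected via chain of convex pieces
    have hBpc : IsPreconnected B := ((convex_closedBall z δ).inter Sq_convex).isPreconnected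
    have hL1pc : IsPreconnected L1 := ((convex_singleton a).prod (convex_Icc _ _)).isPreconnected
    have hL2pc : IsPreconnected L2 := ((convex_Icc _ _).prod (convex_singleton b)).isPreconnected
    have hL3pc : IsPreconnected L3 := ((convex_singleton q).prod (convex_Icc _ _)).isPreconnected
    have c1B : ((a, z.2) : ℝ × ℝ) ∈ B := by
      constructor
      · rw [mem_closedBall, Prod.dist_eq]
        simp only [dist_self]
        rw [Real.dist_eq]
        exact max_le hazd hδ0.le
      · exact ⟨ha01, hz2⟩
    have c1L : ((a, z.2) : ℝ × ℝ) ∈ L1 :=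
      ⟨rfl, ⟨min_le_left _ _, le_max_left _ _⟩⟩
    have c2L1 : ((a, b) : ℝ × ℝ) ∈ L1 := ⟨rfl, ⟨min_le_right _ _, le_max_right _ _⟩⟩
    have c2L2 : ((a, b) : ℝ × ℝ) ∈ L2 := ⟨⟨min_le_left _ _, le_max_left _ _⟩, rfl⟩
    have c3L2 : ((q, b) : ℝ × ℝ) ∈ L2 := ⟨⟨min_le_right _ _, le_max_right _ _⟩, rfl⟩
    have c3L3 : ((q, b) : ℝ × ℝ) ∈ L3 := ⟨rfl, ⟨le_refl b, hb1.le⟩⟩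
    have h12 : IsPreconnected (B ∪ L1) := IsPreconnected.union _ c1B c1L hBpc hL1pc
    have h123 : IsPreconnected ((B ∪ L1) ∪ L2) :=
      IsPreconnected.union _ (Or.inr c2L1) c2L2 h12 hL2pc
    exact IsPreconnected.union _ (Or.inr c3L2) c3L3 h123 hL3pc
  · -- subset of Sq
    have hsub1 : L1 ⊆ Sq := by
      rintro ⟨u, v⟩ ⟨hu, hv⟩
      rcases hz2 with ⟨hza, hzb⟩
      simp only [Set.mem_singleton_iff] at hu
      subst hu
      exact ⟨ha01, ⟨le_trans (le_min hza hb0) hv.1, le_trans hv.2 (max_le hzb hb1.le)⟩⟩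
    have hsub2 : L2 ⊆ Sq := by
      rintro ⟨u, v⟩ ⟨hu, hv⟩
      simp only [Set.mem_singleton_iff] at hv
      subst hv
      exact ⟨⟨le_trans (le_min ha01.1 hq.1) hu.1, le_trans hu.2 (max_le ha01.2 hq.2)⟩,
        ⟨hb0, hb1.le⟩⟩
    have hsub3 : L3 ⊆ Sq := by
      rintro ⟨u, v⟩ ⟨hu, hv⟩
      simp only [Set.mem_singleton_iff] at hu
      subst hu
      exact ⟨hq, ⟨le_trans hb0 hv.1, hv.2⟩⟩
    exact Set.union_subset (Set.union_subset
      (Set.union_subset Set.inter_subset_right hsub1) hsub2) hsub3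
  · exact Or.inr ⟨rfl, ⟨hb1.le, le_refl 1⟩⟩
  · -- avoids S
    rintro s hs (((hsB | hsL1) | hsL2) | hsL3)
    · exact absurd (hδ s hs) (not_lt.mpr (mem_closedBall.mp hsB.1))
    · exact haS ⟨s, hs, Set.mem_singleton_iff.mp hsL1.1⟩
    · exact hbS s hs (Set.mem_singleton_iff.mp hsL2.2)
    · rcases hsL3 with ⟨hs1, hs2⟩
      simp only [Set.mem_singleton_iff] at hs1
      rcases eq_or_ne s.2 1 with h | h
      · exact hqS (by rw [← hs1, ← h]; exact hs)
      · have := hmub s hs h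
        have := hs2.1
        linarith
  · exact ⟨δ, hδ0, fun w hw hd => Or.inl (Or.inl (Or.inl ⟨mem_closedBall.mpr hd.le, hw⟩))⟩

lemma dist_fst_le' (w x : EE) : dist w.1 x.1 ≤ dist w x := by
  rw [Prod.dist_eq]; exact le_max_left _ _

lemma core (hn : 0 < n) (x : EE) (hx : x ∈ Xset n) (A : Finset EE) (hA : A.card = n)
    (hAX : ∀ a ∈ A, a ∈ Xset n) (hxA : x ∉ A) :
    ∃ T₀ : Set EE, T₀ ⊆ Xset n ∧ IsCompact T₀ ∧ IsPreconnected T₀ ∧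
      (∃ ε > 0, ∀ w ∈ Xset n, dist w x < ε → w ∈ T₀) ∧ ∀ a ∈ A, a ∉ T₀ := by
  classical
  obtain ⟨⟨c, z⟩, ⟨hcK, hzSq⟩, rfl⟩ := hx
  by_cases hzP : z ∈ Pset n
  · -- x is one of the special points
    have hxz : Phi n (c, z) = (z, 0) := Phi_special c hzP
    have hane : ∀ a ∈ A, a.1 ≠ z := by
      intro a ha h
      obtain ⟨⟨ca, za⟩, ⟨hca, hza⟩, rfl⟩ := hAX a ha
      have hzz : za = z := h
      subst hzz
      exact hxA (by rwa [Phi_special ca hzP, ← hxz] at ha)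
    obtain ⟨δ, hδ0, hδ⟩ := exists_pos_lt_dist A (fun a => a.1) z hane
    refine ⟨Phi n '' (KK ×ˢ (closedBall z δ ∩ Sq)), ?_, ?_, ?_, ?_, ?_⟩
    · exact Set.image_mono (Set.prod_mono subset_rfl Set.inter_subset_right)
    · exact (KK_compact.prod ((isCompact_closedBall z δ).inter_right Sq_closed)).image Phi_cont
    · obtain ⟨i, hi⟩ := hzP
      exact slices_conn hn KK _ ((convex_closedBall z δ).inter Sq_convex).isPreconnected i
        (by rw [hi]; exact ⟨mem_closedBall_self hδ0.le, hzSq⟩)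
    · refine ⟨δ, hδ0, ?_⟩
      rintro w ⟨⟨cw, zw⟩, ⟨hcw, hzw⟩, rfl⟩ hd
      have hfst : dist zw z ≤ dist (Phi n (cw, zw)) (Phi n (c, z)) :=
        dist_fst_le' (Phi n (cw, zw)) (Phi n (c, z))
      exact ⟨(cw, zw), ⟨hcw, ⟨mem_closedBall.mpr (hfst.trans hd.le), hzw⟩⟩, rfl⟩
    · rintro a ha ⟨⟨cw, zw⟩, ⟨hcw, ⟨hzwB, hzwS⟩⟩, heq⟩
      have h1 : dist a.1 z ≤ δ := by rw [← heq]; exact mem_closedBall.mp hzwB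
      exact absurd (hδ a ha) (not_lt.mpr h1)
  · -- x is not special
    have hd0 : 0 < dd n z := dd_pos hzP
    set hh : EE → ℝ := fun w => w.2 / dd n w.1 with hhh
    have hhx : hh (Phi n (c, z)) = c := mul_div_cancel_right₀ c hd0.ne'
    set S : Set (ℝ × ℝ) := Prod.fst '' {a ∈ (A : Set EE) | a.1 ∈ Pset n ∨ hh a = c} with hS
    have hSfin : S.Finite := (A.finite_toSet.subset (Set.sep_subset _ _)).image _
    have hSsub : S ⊆ Sq := by
      rintro s ⟨a, ⟨haA, _⟩, rfl⟩
      obtain ⟨⟨ca, za⟩, ⟨hca, hza⟩, rfl⟩ := hAX a haA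
      exact hza
    have hzS : z ∉ S := by
      rintro ⟨a, ⟨haA, hcond⟩, h1⟩
      obtain ⟨⟨ca, za⟩, ⟨hca, hza⟩, rfl⟩ := hAX a haA
      have hzaz : za = z := h1
      subst hzaz
      rcases hcond with h | h
      · exact hzP h
      · have hca2 : ca = c := by
          have : ca * dd n za / dd n za = c := h
          rwa [mul_div_cancel_right₀ ca hd0.ne'] at this
        subst hca2
        exact hxA haA
    have hfree : ∃ i : Fin (n+1), pp n i ∉ S := by
      by_contra hcon
      push_neg at hcon
      have hsub : S ⊆ ↑(A.image (fun a => a.1)) := by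
        rintro s ⟨a, ⟨haA, _⟩, rfl⟩
        exact Finset.mem_coe.mpr (Finset.mem_image_of_mem _ haA)
      have h1 : (Finset.univ.image (pp n)) ⊆ A.image (fun a => a.1) := by
        intro s hs
        obtain ⟨i, _, rfl⟩ := Finset.mem_image.mp hs
        exact Finset.mem_coe.mp (hsub (hcon i))
      have hc1 : (Finset.univ.image (pp n)).card = n + 1 := by
        rw [Finset.card_image_of_injective _ (pp_inj hn), Finset.card_univ, Fintype.card_fin]
      have hc2 : (A.image fun a => a.1).card ≤ n := le_trans Finset.card_image_le (le_of_eq hA)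
      have := Finset.card_le_card h1
      omega
    obtain ⟨i, hiS⟩ := hfree
    have hppi : pp n i = (((i : ℝ)/n, 1) : ℝ × ℝ) := rfl
    obtain ⟨R, hRcomp, hRpre, hRSq, hqR, hRS, δ, hδ0, hδball⟩ :=
      grid S hSfin hSsub z hzSq hzS ((i : ℝ)/n) (pp_mem_Sq hn i).1 (hppi ▸ hiS)
    have hiR : pp n i ∈ R := by rw [hppi]; exact hqR
    obtain ⟨ρ, hρ0, hρ⟩ := exists_pos_lt_dist (A.filter (fun a => hh a ≠ c)) hh c
      (fun a ha => (Finset.mem_filter.mp ha).2)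
    set K' : Set ℝ := KK ∩ Icc (c - ρ) (c + ρ) with hK'
    have hcK' : c ∈ K' := ⟨hcK, ⟨by linarith, by linarith⟩⟩
    refine ⟨Phi n '' (K' ×ˢ R), ?_, ?_, ?_, ?_, ?_⟩
    · exact Set.image_mono (Set.prod_mono Set.inter_subset_left hRSq)
    · exact ((KK_compact.inter_right isClosed_Icc).prod hRcomp).image Phi_cont
    · exact slices_conn hn K' R hRpre i hiR
    · have hcont : ContinuousAt hh (Phi n (c, z)) := by
        apply ContinuousAt.div
        · exact continuous_snd.continuousAt
        · exact (dd_cont.comp continuous_fst).continuousAt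
        · exact hd0.ne'
      obtain ⟨ε₁, hε₁0, hε₁⟩ := Metric.continuousAt_iff.mp hcont ρ hρ0
      refine ⟨min ε₁ δ, lt_min hε₁0 hδ0, ?_⟩
      rintro w hwX hwd
      obtain ⟨⟨cw, zw⟩, ⟨hcw, hzw⟩, rfl⟩ := hwX
      have hfst : dist zw z ≤ dist (Phi n (cw, zw)) (Phi n (c, z)) :=
        dist_fst_le' (Phi n (cw, zw)) (Phi n (c, z))
      have hz1 : zw ∈ R := hδball zw hzw
        (lt_of_le_of_lt hfst (lt_of_lt_of_le hwd (min_le_right _ _)))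
      by_cases hzwP : zw ∈ Pset n
      · refine ⟨(c, zw), ⟨hcK', hz1⟩, ?_⟩
        rw [Phi_special c hzwP, Phi_special cw hzwP]
      · have hdw : 0 < dd n zw := dd_pos hzwP
        have hhw : hh (Phi n (cw, zw)) = cw := mul_div_cancel_right₀ cw hdw.ne'
        have h2 : dist (hh (Phi n (cw, zw))) (hh (Phi n (c, z))) < ρ :=
          hε₁ (lt_of_lt_of_le hwd (min_le_left _ _))
        rw [hhw, hhx, Real.dist_eq, abs_sub_lt_iff] at h2
        exact ⟨(cw, zw), ⟨⟨hcw, ⟨by linarith [h2.2], by linarith [h2.1]⟩⟩, hz1⟩, rfl⟩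
    · rintro a haA ⟨⟨cw, zw⟩, ⟨⟨hcwK, hcwI⟩, hzwR⟩, heq⟩
      subst heq
      by_cases haP : zw ∈ Pset n
      · exact hRS zw ⟨Phi n (cw, zw), ⟨haA, Or.inl haP⟩, rfl⟩ hzwR
      · have hdw : 0 < dd n zw := dd_pos haP
        have hhw : hh (Phi n (cw, zw)) = cw := mul_div_cancel_right₀ cw hdw.ne'
        by_cases hhc : hh (Phi n (cw, zw)) = c
        · exact hRS zw ⟨Phi n (cw, zw), ⟨haA, Or.inr hhc⟩, rfl⟩ hzwR
        · have h3 := hρ _ (Finset.mem_filter.mpr ⟨haA, hhc⟩)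
          rw [Real.dist_eq, hhw] at h3
          have h4 : |cw - c| ≤ ρ := abs_sub_le_iff.mpr
            ⟨by linarith [hcwI.2], by linarith [hcwI.1]⟩
          linarith [lt_of_lt_of_le h3 h4]

lemma Xset_connected (hn : 0 < n) : IsConnected (Xset n) :=
  ⟨⟨(pp n 0, 0), sp_mem hn 0⟩,
    slices_conn hn KK Sq Sq_convex.isPreconnected 0 (pp_mem_Sq hn 0)⟩

end Stmt19
end Stmt19aux

open Stmt19 in
theorem statement19_aux :
    ∀ n : ℕ, 0 < n →
      ∃ X : Continuum, Nontrivial X ∧ IsNAposyndetic X n ∧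
        ¬ IsNAposyndetic X (n + 1) := by
  classical
  intro n hn
  haveI hcomp : CompactSpace ↥(Xset n) := isCompact_iff_compactSpace.mp Xset_compact
  haveI hconnS : ConnectedSpace ↥(Xset n) := Subtype.connectedSpace (Xset_connected hn)
  refine ⟨⟨↥(Xset n)⟩, ?_, ?_, ?_⟩
  · -- Nontrivial
    refine ⟨⟨(pp n 0, 0), sp_mem hn 0⟩, ⟨(pp n (Fin.last n), 0), sp_mem hn _⟩, ?_⟩
    intro h
    have h1 : pp n 0 = pp n (Fin.last n) := congrArg (fun w => w.val.1) h
    have h2 := congrArg Fin.val (pp_inj hn h1)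
    simp only [Fin.val_zero, Fin.val_last] at h2
    omega
  · -- n-aposyndetic
    intro x A hcard hxA
    set AE : Finset EE := A.image Subtype.val with hAE
    have hAEcard : AE.card = n := by
      rw [hAE, Finset.card_image_of_injective _ Subtype.val_injective, hcard]
    have hAEX : ∀ a ∈ AE, a ∈ Xset n := by
      intro a ha; obtain ⟨b, _, rfl⟩ := Finset.mem_image.mp ha; exact b.2
    have hxAE : x.val ∉ AE := by
      intro h
      obtain ⟨b, hb, hbe⟩ := Finset.mem_image.mp h
      exact hxA (by rwa [Subtype.val_injective hbe] at hb)
    obtain ⟨T₀, hT₀X, hT₀c, hT₀pc, ⟨ε, hε0, hε⟩, hT₀A⟩ := core hn x.val x.2 AE hAEcard hAEX hxAE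
    refine ⟨Subtype.val ⁻¹' T₀, ⟨?_, ?_, ?_⟩, ?_, ?_⟩
    · exact (hT₀c.isClosed.preimage continuous_subtype_val).isCompact
    · exact ⟨x, hε x.val x.2 (by rw [dist_self]; exact hε0)⟩
    · have himg : (Subtype.val : ↥(Xset n) → EE) '' (Subtype.val ⁻¹' T₀) = T₀ := by
        rw [Subtype.image_preimage_coe]
        exact Set.inter_eq_self_of_subset_right hT₀X
      exact (Topology.IsInducing.subtypeVal.isPreconnected_image).mp (by rw [himg]; exact hT₀pc)
    · rw [mem_interior_iff_mem_nhds, Metric.mem_nhds_iff]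
      exact ⟨ε, hε0, fun w hw => hε w.val w.2 hw⟩
    · intro a ha hmem
      exact hT₀A a.val (Finset.mem_image_of_mem _ ha) hmem
  · -- not (n+1)-aposyndetic
    intro H
    set z₀ : ℝ × ℝ := (1/2, 1/2) with hz₀
    have hz₀Sq : z₀ ∈ Sq := ⟨⟨by norm_num, by norm_num⟩, ⟨by norm_num, by norm_num⟩⟩
    have hz₀P : z₀ ∉ Pset n := by
      rintro ⟨i, hi⟩
      have : (1:ℝ) = 1/2 := congrArg Prod.snd hi
      norm_num at this
    set x : ↥(Xset n) := ⟨Phi n (0, z₀), mem_Xset KK_zero_mem hz₀Sq⟩ with hx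
    set A : Finset ↥(Xset n) :=
      Finset.univ.image (fun i : Fin (n+1) => (⟨(pp n i, 0), sp_mem hn i⟩ : ↥(Xset n))) with hA
    have hAcard : A.card = n + 1 := by
      rw [hA, Finset.card_image_of_injective, Finset.card_univ, Fintype.card_fin]
      intro i j h
      exact pp_inj hn (congrArg (fun w => w.val.1) h)
    have hxA : x ∉ A := by
      intro h
      obtain ⟨i, _, hi⟩ := Finset.mem_image.mp h
      apply hz₀P
      have h1 : ((pp n i, 0) : EE) = Phi n (0, z₀) := congrArg Subtype.val hi
      exact ⟨i, congrArg Prod.fst h1⟩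
    obtain ⟨T, ⟨hTc, hTconn⟩, hxint, havoid⟩ := H x A hAcard hxA
    obtain ⟨ε, hε0, hball⟩ := Metric.mem_nhds_iff.mp (mem_interior_iff_mem_nhds.mp hxint)
    have hd0 : 0 < dd n z₀ := dd_pos hz₀P
    obtain ⟨c, hcK, hc0, hcε⟩ := KK_small (div_pos hε0 hd0)
    set y : ↥(Xset n) := ⟨Phi n (c, z₀), mem_Xset hcK hz₀Sq⟩ with hy
    have hyT : y ∈ T := by
      apply hball
      rw [mem_ball, Subtype.dist_eq]
      have hlt : c * dd n z₀ < ε := (lt_div_iff₀ hd0).mp hcε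
      have hdle : dist (Phi n (c, z₀)) (Phi n (0, z₀)) ≤ c * dd n z₀ := by
        rw [Prod.dist_eq]
        apply max_le
        · have : dist (Phi n (c, z₀)).1 (Phi n (0, z₀)).1 = 0 := dist_self z₀
          rw [this]; positivity
        · have : dist (Phi n (c, z₀)).2 (Phi n (0, z₀)).2 = |c * dd n z₀ - 0 * dd n z₀| :=
            Real.dist_eq _ _
          rw [this, zero_mul, sub_zero, abs_of_nonneg (by positivity)]
      exact lt_of_le_of_lt hdle hlt
    have hxT : x ∈ T := hball (mem_ball_self hε0)
    have hTP : ∀ w ∈ T, w.val.1 ∉ Pset n := by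
      intro w hw hwP
      obtain ⟨⟨cw, zw⟩, ⟨hcw, hzw⟩, heq⟩ := w.2
      have hzwP : zw ∈ Pset n := by rw [← heq] at hwP; exact hwP
      have hw0 : w.val = ((zw, 0) : EE) := by rw [← heq, Phi_special cw hzwP]
      obtain ⟨j, hj⟩ := hzwP
      have hwA : w ∈ A := by
        rw [hA]
        apply Finset.mem_image.mpr
        refine ⟨j, Finset.mem_univ j, Subtype.ext ?_⟩
        show ((pp n j, 0) : EE) = w.val
        rw [hw0, hj]
      exact havoid w hwA hw
    set ψ : ↥(Xset n) → ℝ := fun w => w.val.2 / dd n w.val.1 with hψ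
    have hψcont : ContinuousOn ψ T := by
      apply ContinuousOn.div
      · exact (continuous_snd.comp continuous_subtype_val).continuousOn
      · exact ((dd_cont.comp (continuous_fst.comp continuous_subtype_val))).continuousOn
      · intro w hw
        exact (dd_pos (hTP w hw)).ne'
    have himgpre : IsPreconnected (ψ '' T) := hTconn.2.image ψ hψcont
    have hψx : ψ x = 0 := by
      show (Phi n (0, z₀)).2 / dd n (Phi n (0, z₀)).1 = 0
      show (0 * dd n z₀) / dd n z₀ = 0
      rw [zero_mul, zero_div]
    have hψy : ψ y = c := mul_div_cancel_right₀ c hd0.ne'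
    have hIcc : Icc (0:ℝ) c ⊆ ψ '' T :=
      himgpre.Icc_subset (hψx ▸ Set.mem_image_of_mem ψ hxT) (hψy ▸ Set.mem_image_of_mem ψ hyT)
    have hsubK : ψ '' T ⊆ KK := by
      rintro t ⟨w, hw, rfl⟩
      obtain ⟨⟨cw, zw⟩, ⟨hcw, hzw⟩, heq⟩ := w.2
      have hzwP : zw ∉ Pset n := by
        have := hTP w hw
        rw [← heq] at this
        exact this
      have hval : ψ w = cw := by
        show w.val.2 / dd n w.val.1 = cw
        rw [← heq]
        exact mul_div_cancel_right₀ cw (dd_pos hzwP).ne'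
      rw [hval]; exact hcw
    have hcnt : (Icc (0:ℝ) c).Countable := KK_countable.mono (hIcc.trans hsubK)
    have hmk : (Cardinal.mk ↥(Icc (0:ℝ) c)) ≤ Cardinal.aleph0 :=
      Cardinal.le_aleph0_iff_set_countable.mpr hcnt
    rw [Cardinal.mk_Icc_real hc0] at hmk
    exact absurd hmk (not_le.mpr Cardinal.aleph0_lt_continuum)


/-- For each `n ∈ ℕ` (`n ≥ 1`) there is a nondegenerate continuum that is `n`-aposyndetic
but not `(n+1)`-aposyndetic. -/
theorem statement19 :
    ∀ n : ℕ, 0 < n →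
      ∃ X : Continuum, Nontrivial X ∧ IsNAposyndetic X n ∧
        ¬ IsNAposyndetic X (n + 1) :=
  statement19_aux
end
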